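/- Let $p$ be a prime, let $\mathcal{A} \subseteq \mathbb{F}_p^*$ be nonempty, and suppose the interval $\mathcal{I} = \{1, \ldots, N\} \pmod p$ satisfies $\mathcal{I} \subseteq \mathcal{A}/\mathcal{A}$. Then there exists a subset $\mathcal{A}' \subseteq \mathcal{A}$ with $|\mathcal{A}'| \ge \tfrac{1}{2}|\mathcal{A}|$ such that $|\mathcal{A}\cdot\mathcal{A}| \cdot |\mathcal{A}/\mathcal{A}|^{1/2} \gg |\mathcal{I} \cdot \mathcal{A}'|$. -/

import Mathlib

open Finset Pointwise

section Helpers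

variable {H : Type*} [CommGroup H] [DecidableEq H]

lemma prodFinset_mul {α β : Type*} [DecidableEq α] [DecidableEq β] [Mul α] [Mul β]
    (s u : Finset α) (t v : Finset β) :
    (s ×ˢ t) * (u ×ˢ v) = (s * u) ×ˢ (t * v) := by
  ext ⟨a, b⟩
  simp only [Finset.mem_mul, Finset.mem_product, Prod.exists, Prod.mk_mul_mk, Prod.mk.injEq]
  constructor
  · rintro ⟨x, y, ⟨hx, hy⟩, x', y', ⟨hx', hy'⟩, h1, h2⟩
    exact ⟨⟨x, hx, x', hx', h1⟩, ⟨y, hy, y', hy', h2⟩⟩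
  · rintro ⟨⟨x, hx, x', hx', h1⟩, ⟨y, hy, y', hy', h2⟩⟩
    exact ⟨x, y, ⟨hx, hy⟩, x', y', ⟨hx', hy'⟩, h1, h2⟩


lemma petridis_sq (X B : Finset H) (hX : X.Nonempty) :
    ∃ Y ⊆ X, Y.Nonempty ∧ (Y * B * B).card * X.card ^ 2 ≤ (X * B).card ^ 2 * Y.card := by
  have hXmem : X ∈ X.powerset.erase ∅ :=
    mem_erase_of_ne_of_mem hX.ne_empty (mem_powerset_self X)
  obtain ⟨U, hU, hUmin⟩ := exists_min_image (X.powerset.erase ∅)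
    (fun U => ((U * B).card : NNRat) / U.card) ⟨X, hXmem⟩
  rw [mem_erase, mem_powerset, ← nonempty_iff_ne_empty] at hU
  have hpp : ∀ A' ⊆ U, (U * B).card * A'.card ≤ (A' * B).card * U.card := by
    intro A' hA'
    rcases A'.eq_empty_or_nonempty with rfl | hA'ne
    · simp
    have h := hUmin A' (mem_erase_of_ne_of_mem hA'ne.ne_empty
      (mem_powerset.2 (hA'.trans hU.2)))
    have h1 : (0 : NNRat) < U.card := by exact_mod_cast hU.1.card_pos
    have h2 : (0 : NNRat) < A'.card := by exact_mod_cast hA'ne.card_pos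
    exact_mod_cast (div_le_div_iff₀ h1 h2).1 h
  have hPP := Finset.pluennecke_petridis_inequality_mul B hpp
  have hXr := hUmin X hXmem
  have h1 : (0 : NNRat) < U.card := by exact_mod_cast hU.1.card_pos
  have h2 : (0 : NNRat) < X.card := by exact_mod_cast hX.card_pos
  have hUX : (U * B).card * X.card ≤ (X * B).card * U.card := by
    exact_mod_cast (div_le_div_iff₀ h1 h2).1 hXr
  refine ⟨U, hU.2, hU.1, ?_⟩
  have hu : 0 < U.card := hU.1.card_pos
  have key : (U * B * B).card * X.card ^ 2 * (U.card * U.card)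
      ≤ (X * B).card ^ 2 * U.card * (U.card * U.card) := by
    calc (U * B * B).card * X.card ^ 2 * (U.card * U.card)
        = ((U * B * B).card * U.card) * X.card ^ 2 * U.card := by ring
      _ ≤ ((U * B).card * (U * B).card) * X.card ^ 2 * U.card :=
          Nat.mul_le_mul (Nat.mul_le_mul (by have h := hPP; rw [mul_comm B U] at h; exact h) le_rfl) le_rfl
      _ = ((U * B).card * X.card) * ((U * B).card * X.card) * U.card := by ring
      _ ≤ ((X * B).card * U.card) * ((X * B).card * U.card) * U.card :=
          Nat.mul_le_mul (Nat.mul_le_mul hUX hUX) le_rfl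
      _ = (X * B).card ^ 2 * U.card * (U.card * U.card) := by ring
  exact Nat.le_of_mul_le_mul_right key (Nat.mul_pos hu hu)

lemma diffsum_aux (X B₁ B₂ : Finset H) (hX : X.Nonempty) (hB₂ : B₂.Nonempty)
    (hba : (X * B₂).card ≤ (X * B₁).card) :
    ∃ Y ⊆ X, Y.Nonempty ∧
      (Y * B₁ * B₂).card * X.card ^ 2 ≤ 9 * ((X * B₁).card * (X * B₂).card) * Y.card := by
  classical
  set a := (X * B₁).card with ha
  set b := (X * B₂).card with hb
  have hb0 : 0 < b := (hX.mul hB₂).card_pos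
  set r : ℕ := a / b + 1 with hr
  have hr0 : 0 < r := Nat.succ_pos _
  have hrb_ge : a ≤ r * b := by
    have h1 := Nat.div_add_mod a b
    have h2 := Nat.mod_lt a hb0
    have : a < b * (a / b) + b := by omega
    calc a ≤ b * (a / b) + b := le_of_lt this
      _ = r * b := by rw [hr]; ring
  have hrb_le : r * b ≤ a + b := by
    have := Nat.div_mul_le_self a b
    calc r * b = a / b * b + b := by rw [hr]; ring
      _ ≤ a + b := by omega
  -- move to the product group
  set J : Finset (Multiplicative ℤ) :=
    (Finset.Icc (1 : ℤ) (r : ℤ)).map Multiplicative.ofAdd.toEmbedding with hJ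
  have hJcard : J.card = r := by
    rw [hJ, Finset.card_map, Int.card_Icc]; omega
  have h1J : (1 : Multiplicative ℤ) ∉ J := by
    rw [hJ]
    simp only [Finset.mem_map, Finset.mem_Icc, Equiv.toEmbedding_apply]
    rintro ⟨z, hz, hz1⟩
    have : z = (0 : ℤ) := hz1
    omega
  set X' : Finset (H × Multiplicative ℤ) := X ×ˢ ({1} : Finset (Multiplicative ℤ)) with hX'
  set Bu : Finset (H × Multiplicative ℤ) :=
    (B₁ ×ˢ ({1} : Finset (Multiplicative ℤ))) ∪ (B₂ ×ˢ J) with hBu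
  have hX'ne : X'.Nonempty := hX.product (singleton_nonempty 1)
  obtain ⟨Y', hY'X, hY'ne, hkey⟩ := petridis_sq X' Bu hX'ne
  set Y : Finset H := Y'.image Prod.fst with hY
  have hY'eq : Y' = Y ×ˢ ({1} : Finset (Multiplicative ℤ)) := by
    ext ⟨u, v⟩
    simp only [hY, Finset.mem_product, Finset.mem_image, Finset.mem_singleton, Prod.exists]
    constructor
    · intro h
      have hv : v = 1 := by
        have := hY'X h
        rw [hX'] at this
        exact Finset.mem_singleton.1 (Finset.mem_product.1 this).2
      exact ⟨⟨u, v, h, rfl⟩, hv⟩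
    · rintro ⟨⟨u', v', h, rfl⟩, rfl⟩
      have hv' : v' = 1 := by
        have := hY'X h
        rw [hX'] at this
        exact Finset.mem_singleton.1 (Finset.mem_product.1 this).2
      rwa [hv'] at h
  have hYX : Y ⊆ X := by
    intro y hy
    obtain ⟨⟨u, v⟩, huv, rfl⟩ := Finset.mem_image.1 hy
    have := hY'X huv
    rw [hX'] at this
    exact (Finset.mem_product.1 this).1
  have hYne : Y.Nonempty := hY'ne.image _
  have hY'card : Y'.card = Y.card := by rw [hY'eq, Finset.card_product]; simp
  have hX'card : X'.card = X.card := by rw [hX', Finset.card_product]; simp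
  -- compute X' * Bu
  have hXBu : (X' * Bu).card = a + b * r := by
    rw [hBu, mul_union, hX', prodFinset_mul, prodFinset_mul]
    rw [Finset.card_union_of_disjoint]
    · rw [Finset.card_product, Finset.card_product]
      simp [hJcard, ← ha, ← hb]
    · rw [Finset.disjoint_left]
      rintro ⟨u, v⟩ h1 h2
      have hv1 : v ∈ ({1} : Finset (Multiplicative ℤ)) * {1} := (Finset.mem_product.1 h1).2
      have hv2 : v ∈ ({1} : Finset (Multiplicative ℤ)) * J := (Finset.mem_product.1 h2).2
      rw [show ({1} : Finset (Multiplicative ℤ)) * {1} = {1} by simp] at hv1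
      rw [show ({1} : Finset (Multiplicative ℤ)) * J = J by
        rw [show ({1} : Finset (Multiplicative ℤ)) = (1 : Finset (Multiplicative ℤ)) from rfl,
          one_mul]] at hv2
      rw [Finset.mem_singleton] at hv1
      subst hv1
      exact h1J hv2
  -- lower bound for (Y' * Bu * Bu).card
  have hsub : (Y ×ˢ ({1} : Finset (Multiplicative ℤ))) * (B₁ ×ˢ ({1} : Finset (Multiplicative ℤ)))
      * (B₂ ×ˢ J) ⊆ Y' * Bu * Bu := by
    rw [← hY'eq, hBu]
    exact mul_subset_mul (mul_subset_mul (Finset.Subset.refl _) Finset.subset_union_left)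
      Finset.subset_union_right
  have hYBB : (Y * B₁ * B₂).card * r ≤ (Y' * Bu * Bu).card := by
    have heq : (Y ×ˢ ({1} : Finset (Multiplicative ℤ))) * (B₁ ×ˢ ({1} : Finset (Multiplicative ℤ)))
        * (B₂ ×ˢ J) = (Y * B₁ * B₂) ×ˢ J := by
      rw [prodFinset_mul, prodFinset_mul]
      congr 1
      rw [show ({1} : Finset (Multiplicative ℤ)) * {1} = ({1} : Finset (Multiplicative ℤ)) by simp]
      rw [show ({1} : Finset (Multiplicative ℤ)) = (1 : Finset (Multiplicative ℤ)) from rfl,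
        one_mul]
    calc (Y * B₁ * B₂).card * r = ((Y * B₁ * B₂) ×ˢ J).card := by
          rw [Finset.card_product, hJcard]
      _ ≤ (Y' * Bu * Bu).card := by rw [← heq]; exact Finset.card_le_card hsub
  refine ⟨Y, hYX, hYne, ?_⟩
  -- arithmetic
  have harith : (a + b * r) ^ 2 ≤ 9 * (a * b) * r := by
    have hba' : b ≤ a := hba
    have h3a : a + b * r ≤ 3 * a := by
      have : b * r = r * b := Nat.mul_comm _ _
      omega
    calc (a + b * r) ^ 2 ≤ (3 * a) ^ 2 := Nat.pow_le_pow_left h3a 2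
      _ = 9 * (a * a) := by ring
      _ ≤ 9 * (a * (r * b)) := by
          exact Nat.mul_le_mul le_rfl (Nat.mul_le_mul le_rfl hrb_ge)
      _ = 9 * (a * b) * r := by ring
  have hmain : (Y * B₁ * B₂).card * X.card ^ 2 * r ≤ 9 * (a * b) * Y.card * r := by
    calc (Y * B₁ * B₂).card * X.card ^ 2 * r
        = ((Y * B₁ * B₂).card * r) * X.card ^ 2 := by ring
      _ ≤ (Y' * Bu * Bu).card * X.card ^ 2 := Nat.mul_le_mul hYBB le_rfl
      _ = (Y' * Bu * Bu).card * X'.card ^ 2 := by rw [hX'card]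
      _ ≤ (X' * Bu).card ^ 2 * Y'.card := hkey
      _ = (a + b * r) ^ 2 * Y.card := by rw [hXBu, hY'card]
      _ ≤ (9 * (a * b) * r) * Y.card := Nat.mul_le_mul harith le_rfl
      _ = 9 * (a * b) * Y.card * r := by ring
  exact Nat.le_of_mul_le_mul_right hmain hr0

lemma diffsum (X B₁ B₂ : Finset H) (hX : X.Nonempty) (hB₁ : B₁.Nonempty) (hB₂ : B₂.Nonempty) :
    ∃ Y ⊆ X, Y.Nonempty ∧
      (Y * B₁ * B₂).card * X.card ^ 2 ≤ 9 * ((X * B₁).card * (X * B₂).card) * Y.card := by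
  rcases le_total ((X * B₂).card) ((X * B₁).card) with h | h
  · exact diffsum_aux X B₁ B₂ hX hB₂ h
  · obtain ⟨Y, h1, h2, h3⟩ := diffsum_aux X B₂ B₁ hX hB₁ h
    refine ⟨Y, h1, h2, ?_⟩
    rw [show Y * B₁ * B₂ = Y * B₂ * B₁ from mul_right_comm _ _ _,
      show (X * B₁).card * (X * B₂).card = (X * B₂).card * (X * B₁).card from Nat.mul_comm _ _]
    exact h3

lemma ks_aux (X₀ B₁ B₂ : Finset H) (hB₁ : B₁.Nonempty) (hB₂ : B₂.Nonempty) :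
    ∀ n (R : Finset H), R.card ≤ n → R ⊆ X₀ →
    ∃ Z ⊆ R, 2 * R.card ≤ 2 * Z.card + X₀.card ∧
      (Z * B₁ * B₂).card * X₀.card ^ 2 ≤ 36 * ((X₀ * B₁).card * (X₀ * B₂).card) * Z.card := by
  intro n
  induction n with
  | zero =>
    intro R hR _
    refine ⟨∅, empty_subset _, ?_, by simp⟩
    interval_cases h : R.card <;> omega
  | succ n ih =>
    intro R hRn hRX
    by_cases hsmall : 2 * R.card ≤ X₀.card
    · exact ⟨∅, empty_subset _, by omega, by simp⟩
    push_neg at hsmall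
    have hRne : R.Nonempty := by
      rw [← Finset.card_pos]; omega
    obtain ⟨Y, hYR, hYne, hYbound⟩ := diffsum R B₁ B₂ hRne hB₁ hB₂
    have hYpos : 0 < Y.card := hYne.card_pos
    have hsd : (R \ Y).card = R.card - Y.card := card_sdiff_of_subset hYR
    have hYle : Y.card ≤ R.card := card_le_card hYR
    obtain ⟨Z', hZ'R', hZ'half, hZ'bound⟩ := ih (R \ Y) (by omega) (sdiff_subset.trans hRX)
    have hdisj : Disjoint Z' Y := Finset.disjoint_of_subset_left hZ'R' sdiff_disjoint
    have hcardU : (Z' ∪ Y).card = Z'.card + Y.card := card_union_of_disjoint hdisj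
    refine ⟨Z' ∪ Y, union_subset (hZ'R'.trans sdiff_subset) hYR, by omega, ?_⟩
    set a := (X₀ * B₁).card
    set b := (X₀ * B₂).card
    have ha : (R * B₁).card ≤ a := card_le_card (mul_subset_mul_right hRX)
    have hbb : (R * B₂).card ≤ b := card_le_card (mul_subset_mul_right hRX)
    have h4 : X₀.card ^ 2 ≤ 4 * R.card ^ 2 := by nlinarith
    have hY36 : (Y * B₁ * B₂).card * X₀.card ^ 2 ≤ 36 * (a * b) * Y.card := by
      calc (Y * B₁ * B₂).card * X₀.card ^ 2
          ≤ (Y * B₁ * B₂).card * (4 * R.card ^ 2) := Nat.mul_le_mul le_rfl h4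
        _ = 4 * ((Y * B₁ * B₂).card * R.card ^ 2) := by ring
        _ ≤ 4 * (9 * ((R * B₁).card * (R * B₂).card) * Y.card) := Nat.mul_le_mul le_rfl hYbound
        _ ≤ 4 * (9 * (a * b) * Y.card) :=
            Nat.mul_le_mul le_rfl (Nat.mul_le_mul
              (Nat.mul_le_mul le_rfl (Nat.mul_le_mul ha hbb)) le_rfl)
        _ = 36 * (a * b) * Y.card := by ring
    have hsplit : ((Z' ∪ Y) * B₁ * B₂).card ≤ (Z' * B₁ * B₂).card + (Y * B₁ * B₂).card := by
      rw [union_mul, union_mul]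
      exact card_union_le _ _
    calc ((Z' ∪ Y) * B₁ * B₂).card * X₀.card ^ 2
        ≤ ((Z' * B₁ * B₂).card + (Y * B₁ * B₂).card) * X₀.card ^ 2 :=
          Nat.mul_le_mul hsplit le_rfl
      _ = (Z' * B₁ * B₂).card * X₀.card ^ 2 + (Y * B₁ * B₂).card * X₀.card ^ 2 := by ring
      _ ≤ 36 * (a * b) * Z'.card + 36 * (a * b) * Y.card := Nat.add_le_add hZ'bound hY36
      _ = 36 * (a * b) * (Z' ∪ Y).card := by rw [hcardU]; ring

lemma katz_shen (X B₁ B₂ : Finset H) (hX : X.Nonempty) (hB₁ : B₁.Nonempty) (hB₂ : B₂.Nonempty) :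
    ∃ Z ⊆ X, X.card ≤ 2 * Z.card ∧
      (Z * B₁ * B₂).card * X.card ≤ 36 * ((X * B₁).card * (X * B₂).card) := by
  obtain ⟨Z, hZX, hhalf, hbound⟩ := ks_aux X B₁ B₂ hB₁ hB₂ X.card X le_rfl subset_rfl
  refine ⟨Z, hZX, by omega, ?_⟩
  have hZle : Z.card ≤ X.card := card_le_card hZX
  have hXpos : 0 < X.card := hX.card_pos
  apply Nat.le_of_mul_le_mul_right _ hXpos
  calc (Z * B₁ * B₂).card * X.card * X.card = (Z * B₁ * B₂).card * X.card ^ 2 := by ring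
    _ ≤ 36 * ((X * B₁).card * (X * B₂).card) * Z.card := hbound
    _ ≤ 36 * ((X * B₁).card * (X * B₂).card) * X.card := Nat.mul_le_mul le_rfl hZle

end Helpers

theorem stmt_17 :
    ∃ c : ℝ, 0 < c ∧ ∀ (p : ℕ) [Fact p.Prime], ∀ (A : Finset (ZMod p)) (N : ℕ),
      A.Nonempty → (0 : ZMod p) ∉ A →
      ((Finset.Icc 1 N).image (fun n : ℕ => (n : ZMod p))) ⊆ A / A →
      ∃ A' ⊆ A, A.card ≤ 2 * A'.card ∧
        c * ((((Finset.Icc 1 N).image (fun n : ℕ => (n : ZMod p))) * A').card : ℝ)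
          ≤ ((A * A).card : ℝ) * ((A / A).card : ℝ) ^ ((1 : ℝ) / 2) := by
  refine ⟨1 / 36, by norm_num, ?_⟩
  intro p _ A N hA hA0 hIA
  classical
  set I : Finset (ZMod p) := (Finset.Icc 1 N).image (fun n : ℕ => (n : ZMod p)) with hIdef
  have h0 : ∀ a ∈ A, a ≠ (0 : ZMod p) := fun a ha h => hA0 (h ▸ ha)
  set B : Finset (ZMod p)ˣ := A.attach.image (fun a => Units.mk0 a.1 (h0 a.1 a.2)) with hBdef
  have hvalinj : Function.Injective (Units.val : (ZMod p)ˣ → ZMod p) := fun a b h => Units.ext h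
  have hBA : B.image Units.val = A := by
    ext x
    simp only [hBdef, Finset.mem_image, Finset.mem_attach, true_and, Subtype.exists]
    constructor
    · rintro ⟨u, ⟨a, ha, rfl⟩, rfl⟩
      simpa using ha
    · intro hx
      exact ⟨Units.mk0 x (h0 x hx), ⟨x, hx, rfl⟩, rfl⟩
  have hBcard : B.card = A.card := by
    rw [← hBA, Finset.card_image_of_injective _ hvalinj]
  have hBne : B.Nonempty := by
    rw [← Finset.card_pos, hBcard]; exact hA.card_pos
  have himul : ∀ S T : Finset (ZMod p)ˣ,
      (S * T).image Units.val = S.image Units.val * T.image Units.val := fun S T => by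
    exact Finset.image_mul (Units.coeHom (ZMod p)) (s := S) (t := T)
  have hidiv : ∀ S T : Finset (ZMod p)ˣ,
      (S / T).image Units.val = S.image Units.val / T.image Units.val := fun S T => by
    exact Finset.image_div (Units.coeHom (ZMod p)) (s := S) (t := T)
  have hAA : (B * B).image Units.val = A * A := by rw [himul, hBA]
  have hAdA : (B / B).image Units.val = A / A := by rw [hidiv, hBA]
  have hAAcard : (B * B).card = (A * A).card := by
    rw [← hAA, Finset.card_image_of_injective _ hvalinj]
  have hAdAcard : (B / B).card = (A / A).card := by
    rw [← hAdA, Finset.card_image_of_injective _ hvalinj]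
  set J : Finset (ZMod p)ˣ := (B / B).filter (fun u => (u : ZMod p) ∈ I) with hJdef
  have hJI : J.image Units.val = I := by
    apply Finset.Subset.antisymm
    · intro x hx
      obtain ⟨u, hu, rfl⟩ := Finset.mem_image.1 hx
      exact (Finset.mem_filter.1 hu).2
    · intro x hx
      have hx' : x ∈ (B / B).image Units.val := by rw [hAdA]; exact hIA hx
      obtain ⟨u, hu, rfl⟩ := Finset.mem_image.1 hx'
      exact Finset.mem_image.2 ⟨u, Finset.mem_filter.2 ⟨hu, hx⟩, rfl⟩
  obtain ⟨Z, hZB, hhalf, hbound⟩ := katz_shen B B B⁻¹ hBne hBne hBne.inv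
  set A' : Finset (ZMod p) := Z.image Units.val with hA'def
  have hA'A : A' ⊆ A := by rw [← hBA]; exact Finset.image_subset_image hZB
  have hA'card : A'.card = Z.card := Finset.card_image_of_injective _ hvalinj
  refine ⟨A', hA'A, by omega, ?_⟩
  -- transfer the key bound
  have hJZ : (J * Z).image Units.val = I * A' := by rw [himul, hJI]
  have hJZcard : (I * A').card = (J * Z).card := by
    rw [← hJZ, Finset.card_image_of_injective _ hvalinj]
  have hmono : (J * Z).card ≤ (Z * B * B⁻¹).card := by
    apply Finset.card_le_card
    have h1 : J * Z ⊆ (B / B) * Z := mul_subset_mul_right (Finset.filter_subset _ _)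
    have h2 : (B / B) * Z = Z * B * B⁻¹ := by
      rw [mul_comm, div_eq_mul_inv, mul_assoc]
    rw [← h2]; exact h1
  have hBBinv : B * B⁻¹ = B / B := (div_eq_mul_inv B B).symm
  have hnat : (I * A').card * A.card ≤ 36 * ((A * A).card * (A / A).card) := by
    calc (I * A').card * A.card = (J * Z).card * B.card := by rw [hJZcard, hBcard]
      _ ≤ (Z * B * B⁻¹).card * B.card := Nat.mul_le_mul hmono le_rfl
      _ ≤ 36 * ((B * B).card * (B * B⁻¹).card) := hbound
      _ = 36 * ((A * A).card * (A / A).card) := by rw [hBBinv, hAAcard, hAdAcard]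
  -- final real arithmetic
  have hm : (1 : ℝ) ≤ (A.card : ℝ) := by exact_mod_cast hA.card_pos
  have hd1 : (1 : ℝ) ≤ ((A / A).card : ℝ) := by exact_mod_cast (hA.div hA).card_pos
  have hdm : ((A / A).card : ℝ) ≤ (A.card : ℝ) ^ 2 := by
    have := Finset.card_div_le (s := A) (t := A)
    have h2 : ((A / A).card : ℝ) ≤ (A.card : ℝ) * (A.card : ℝ) := by exact_mod_cast this
    nlinarith
  have hkeyR : ((I * A').card : ℝ) * (A.card : ℝ)
      ≤ 36 * (((A * A).card : ℝ) * ((A / A).card : ℝ)) := by exact_mod_cast hnat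
  set d : ℝ := ((A / A).card : ℝ)
  set m : ℝ := (A.card : ℝ)
  set s : ℝ := ((A * A).card : ℝ)
  have hd0 : (0 : ℝ) < d := lt_of_lt_of_le one_pos hd1
  have hs0 : (0 : ℝ) ≤ s := Nat.cast_nonneg _
  have hroot : d ^ ((1 : ℝ) / 2) * d ^ ((1 : ℝ) / 2) = d := by
    rw [← Real.rpow_add hd0]; norm_num
  have hrle : d ^ ((1 : ℝ) / 2) ≤ m := by
    calc d ^ ((1 : ℝ) / 2) ≤ (m ^ 2) ^ ((1 : ℝ) / 2) :=
          Real.rpow_le_rpow (le_of_lt hd0) hdm (by norm_num)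
      _ = m := by
          rw [← Real.rpow_natCast m 2, ← Real.rpow_mul (by linarith)]
          norm_num
  have hrpos : (0 : ℝ) < d ^ ((1 : ℝ) / 2) := Real.rpow_pos_of_pos hd0 _
  have hdmd : d ≤ m * d ^ ((1 : ℝ) / 2) := by nlinarith
  have hfinal : ((I * A').card : ℝ) * m ≤ 36 * s * d ^ ((1 : ℝ) / 2) * m := by
    calc ((I * A').card : ℝ) * m ≤ 36 * (s * d) := hkeyR
      _ ≤ 36 * (s * (m * d ^ ((1 : ℝ) / 2))) := by nlinarith
      _ = 36 * s * d ^ ((1 : ℝ) / 2) * m := by ring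
  have hm0 : (0 : ℝ) < m := lt_of_lt_of_le one_pos hm
  have := le_of_mul_le_mul_right hfinal hm0
  linarith
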